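/- For any Ω ∈ (-1,1) and Γ > 0, setting α = √(1+Ω), β = √(1-Ω), μ = √(1-Ω²), the complex-valued functions A(Z) = √(2/(3Γ)) μ / (α cosh(μZ) - iβ sinh(μZ)) and B(Z) = -√(2/(3Γ)) μ / (α cosh(μZ) + iβ sinh(μZ)) satisfy the stationary coupled mode equations iA' + ΩA + B + Γ(|A|² + 2|B|²)A = 0 and -iB' + ΩB + A + Γ(2|A|² + |B|²)B = 0 on ℝ. -/

import Mathlib

open Complex

set_option maxHeartbeats 2000000 in
/-- The NLCME gap solitons satisfy the stationary coupled mode equations. -/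
theorem stmt1 (Ω Γ : ℝ) (hΩ : Ω ∈ Set.Ioo (-1 : ℝ) 1) (hΓ : 0 < Γ)
    (α β μ : ℝ) (hα : α = Real.sqrt (1 + Ω)) (hβ : β = Real.sqrt (1 - Ω))
    (hμ : μ = Real.sqrt (1 - Ω ^ 2))
    (A B : ℝ → ℂ)
    (hA : A = fun Z => (Real.sqrt (2 / (3 * Γ)) * μ : ℝ) /
      ((α : ℂ) * Real.cosh (μ * Z) - Complex.I * (β : ℂ) * Real.sinh (μ * Z)))
    (hB : B = fun Z => -((Real.sqrt (2 / (3 * Γ)) * μ : ℝ) : ℂ) /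
      ((α : ℂ) * Real.cosh (μ * Z) + Complex.I * (β : ℂ) * Real.sinh (μ * Z))) :
    ∀ Z : ℝ,
      Complex.I * deriv A Z + (Ω : ℂ) * A Z + B Z +
        ((Γ * (‖A Z‖ ^ 2 + 2 * ‖B Z‖ ^ 2) : ℝ) : ℂ) * A Z = 0 ∧
      -Complex.I * deriv B Z + (Ω : ℂ) * B Z + A Z +
        ((Γ * (2 * ‖A Z‖ ^ 2 + ‖B Z‖ ^ 2) : ℝ) : ℂ) * B Z = 0 := by
  obtain ⟨h1, h2⟩ := hΩ
  have hΩ1 : (0:ℝ) < 1 + Ω := by linarith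
  have hΩ2 : (0:ℝ) < 1 - Ω := by linarith
  have hα0 : 0 < α := hα ▸ Real.sqrt_pos.mpr hΩ1
  have hβ0 : 0 < β := hβ ▸ Real.sqrt_pos.mpr hΩ2
  have hα2 : α ^ 2 = 1 + Ω := by rw [hα]; exact Real.sq_sqrt hΩ1.le
  have hβ2 : β ^ 2 = 1 - Ω := by rw [hβ]; exact Real.sq_sqrt hΩ2.le
  have hαβ : α * β = μ := by
    rw [hα, hβ, hμ, ← Real.sqrt_mul hΩ1.le]
    ring_nf
  have hc2 : Real.sqrt (2 / (3 * Γ)) ^ 2 = 2 / (3 * Γ) := Real.sq_sqrt (by positivity)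
  intro Z
  set k : ℂ := ((Real.sqrt (2 / (3 * Γ)) * μ : ℝ) : ℂ) with hk
  set c := Real.cosh (μ * Z) with hcdef
  set s := Real.sinh (μ * Z) with hsdef
  have hc1 : (1:ℝ) ≤ c := Real.one_le_cosh _
  have hcs : c ^ 2 - s ^ 2 = 1 := Real.cosh_sq_sub_sinh_sq _
  set Dm : ℂ := (α : ℂ) * c - Complex.I * β * s with hDmdef
  set Dp : ℂ := (α : ℂ) * c + Complex.I * β * s with hDpdef
  have hDm : Dm ≠ 0 := by
    intro h
    have hre := congrArg Complex.re h
    simp [hDmdef] at hre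
    rcases hre with h | h <;> linarith
  have hDp : Dp ≠ 0 := by
    intro h
    have hre := congrArg Complex.re h
    simp [hDpdef] at hre
    rcases hre with h | h <;> linarith
  -- derivatives
  have hlin : HasDerivAt (fun Z : ℝ => μ * Z) μ Z := by
    simpa using (hasDerivAt_id Z).const_mul μ
  have hcoshC : HasDerivAt (fun Z : ℝ => ((Real.cosh (μ * Z) : ℝ) : ℂ)) ((s * μ : ℝ) : ℂ) Z :=
    (((Real.hasDerivAt_cosh (μ * Z)).comp Z hlin).ofReal_comp)
  have hsinhC : HasDerivAt (fun Z : ℝ => ((Real.sinh (μ * Z) : ℝ) : ℂ)) ((c * μ : ℝ) : ℂ) Z :=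
    (((Real.hasDerivAt_sinh (μ * Z)).comp Z hlin).ofReal_comp)
  have hDmD : HasDerivAt (fun Z : ℝ => (α : ℂ) * Real.cosh (μ * Z) - Complex.I * β * Real.sinh (μ * Z))
      ((α : ℂ) * ((s * μ : ℝ) : ℂ) - Complex.I * β * ((c * μ : ℝ) : ℂ)) Z :=
    (hcoshC.const_mul (α : ℂ)).sub (hsinhC.const_mul (Complex.I * β))
  have hDpD : HasDerivAt (fun Z : ℝ => (α : ℂ) * Real.cosh (μ * Z) + Complex.I * β * Real.sinh (μ * Z))
      ((α : ℂ) * ((s * μ : ℝ) : ℂ) + Complex.I * β * ((c * μ : ℝ) : ℂ)) Z :=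
    (hcoshC.const_mul (α : ℂ)).add (hsinhC.const_mul (Complex.I * β))
  have hAD : HasDerivAt A ((0 * Dm - k * ((α : ℂ) * ((s * μ : ℝ) : ℂ) - Complex.I * β * ((c * μ : ℝ) : ℂ))) / Dm ^ 2) Z := by
    rw [hA]
    exact (hasDerivAt_const Z k).div hDmD hDm
  have hBD : HasDerivAt B ((0 * Dp - (-k) * ((α : ℂ) * ((s * μ : ℝ) : ℂ) + Complex.I * β * ((c * μ : ℝ) : ℂ))) / Dp ^ 2) Z := by
    rw [hB]
    exact (hasDerivAt_const Z (-k)).div hDpD hDp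
  have hAZ : A Z = k / Dm := by rw [hA]
  have hBZ : B Z = -k / Dp := by rw [hB]
  -- abs values
  have habs : ∀ z : ℂ, ((‖z‖ ^ 2 : ℝ) : ℂ) = z * (starRingEnd ℂ) z := by
    intro z
    rw [Complex.sq_norm, Complex.mul_conj]
  have hconjDm : (starRingEnd ℂ) Dm = Dp := by
    simp only [hDmdef, hDpdef, map_sub, map_mul, Complex.conj_ofReal, Complex.conj_I]
    ring
  have hconjDp : (starRingEnd ℂ) Dp = Dm := by
    simp only [hDmdef, hDpdef, map_add, map_mul, Complex.conj_ofReal, Complex.conj_I]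
    ring
  have hconjk : (starRingEnd ℂ) k = k := by rw [hk]; exact Complex.conj_ofReal _
  have hA2 : ((‖A Z‖ ^ 2 : ℝ) : ℂ) = k ^ 2 / (Dm * Dp) := by
    rw [habs, hAZ, map_div₀, hconjDm, hconjk, div_mul_div_comm, sq]
  have hB2 : ((‖B Z‖ ^ 2 : ℝ) : ℂ) = k ^ 2 / (Dm * Dp) := by
    rw [habs, hBZ, map_div₀, map_neg, hconjDp, hconjk, div_mul_div_comm, neg_mul_neg, sq,
      mul_comm Dp Dm]
  have hk2 : (3 : ℂ) * Γ * k ^ 2 = 2 * μ ^ 2 := by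
    rw [hk]
    push_cast
    have : (Real.sqrt (2 / (3 * Γ)) : ℂ) ^ 2 = ((2 / (3 * Γ) : ℝ) : ℂ) := by
      exact_mod_cast congrArg (fun x : ℝ => (x : ℂ)) hc2
    push_cast at this ⊢
    rw [mul_pow, this]
    have hΓ' : (Γ : ℂ) ≠ 0 := by exact_mod_cast hΓ.ne'
    field_simp
  have hα2C : (α:ℂ) ^ 2 = 1 + (Ω:ℂ) := by exact_mod_cast congrArg (fun x:ℝ => (x:ℂ)) hα2
  have hβ2C : (β:ℂ) ^ 2 = 1 - (Ω:ℂ) := by exact_mod_cast congrArg (fun x:ℝ => (x:ℂ)) hβ2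
  have hαβC : (α:ℂ) * β = (μ:ℂ) := by exact_mod_cast congrArg (fun x:ℝ => (x:ℂ)) hαβ
  have hcsC : (c:ℂ) ^ 2 - (s:ℂ) ^ 2 = 1 := by exact_mod_cast congrArg (fun x:ℝ => (x:ℂ)) hcs
  have hμ2 : μ ^ 2 = 1 - Ω ^ 2 := by
    rw [hμ]; exact Real.sq_sqrt (by nlinarith)
  have hμ2C : (μ:ℂ) ^ 2 = 1 - (Ω:ℂ) ^ 2 := by exact_mod_cast congrArg (fun x:ℝ => (x:ℂ)) hμ2
  clear_value k c s Dm Dp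
  constructor
  · simp only [Complex.ofReal_mul, Complex.ofReal_add, Complex.ofReal_ofNat]
    rw [hA2, hB2, hAD.deriv, hAZ, hBZ]
    push_cast
    have hNum : -Complex.I * ((α:ℂ) * s * μ - Complex.I * β * c * μ) * Dp +
        (Ω:ℂ) * (Dm * Dp) - Dm ^ 2 + 3 * (Γ:ℂ) * k ^ 2 = 0 := by
      rw [hDmdef, hDpdef]
      linear_combination
        (-(β:ℂ)^2 * s^2 - (β:ℂ)^2 * s^2 * Ω + (β:ℂ)^2 * μ * c * s * Complex.I
          - (α:ℂ) * β * μ * s^2 + (α:ℂ) * β * μ * c^2) * Complex.I_sq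
        + (-(c:ℂ)^2 + (c:ℂ)^2 * Ω - (μ:ℂ) * c * s * Complex.I) * hα2C
        + ((s:ℂ)^2 + (s:ℂ)^2 * Ω - (μ:ℂ) * c * s * Complex.I) * hβ2C
        + (-1 + (Ω:ℂ)^2 - (α:ℂ) * β * μ) * hcsC
        + hμ2C
        + (2 * (c:ℂ) * s * Complex.I - (μ:ℂ)) * hαβC
        + hk2
    trans k * (-Complex.I * ((α:ℂ) * s * μ - Complex.I * β * c * μ) * Dp +
        (Ω:ℂ) * (Dm * Dp) - Dm ^ 2 + 3 * (Γ:ℂ) * k ^ 2) / (Dm ^ 2 * Dp)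
    · field_simp [hDm, hDp]
      ring
    · rw [hNum, mul_zero, zero_div]
  · simp only [Complex.ofReal_mul, Complex.ofReal_add, Complex.ofReal_ofNat]
    rw [hA2, hB2, hBD.deriv, hAZ, hBZ]
    push_cast
    have hNum : -Complex.I * ((α:ℂ) * s * μ + Complex.I * β * c * μ) * Dm -
        (Ω:ℂ) * (Dp * Dm) + Dp ^ 2 - 3 * (Γ:ℂ) * k ^ 2 = 0 := by
      rw [hDmdef, hDpdef]
      linear_combination
        ((β:ℂ)^2 * s^2 + (β:ℂ)^2 * s^2 * Ω + (β:ℂ)^2 * μ * c * s * Complex.I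
          + (α:ℂ) * β * μ * s^2 - (α:ℂ) * β * μ * c^2) * Complex.I_sq
        + ((c:ℂ)^2 - (c:ℂ)^2 * Ω - (μ:ℂ) * c * s * Complex.I) * hα2C
        + (-(s:ℂ)^2 - (s:ℂ)^2 * Ω - (μ:ℂ) * c * s * Complex.I) * hβ2C
        + (1 - (Ω:ℂ)^2 + (α:ℂ) * β * μ) * hcsC
        - hμ2C
        + (2 * (c:ℂ) * s * Complex.I + (μ:ℂ)) * hαβC
        - hk2
    trans k * (-Complex.I * ((α:ℂ) * s * μ + Complex.I * β * c * μ) * Dm -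
        (Ω:ℂ) * (Dp * Dm) + Dp ^ 2 - 3 * (Γ:ℂ) * k ^ 2) / (Dp ^ 2 * Dm)
    · field_simp [hDm, hDp]
      ring
    · rw [hNum, mul_zero, zero_div]
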